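/- Let ω be a control function on [0,T] and 0 < δ ≤ Δ. Then N_δ(ω) ≤ (Δ/δ)(2 N_Δ(ω) + 2) , and in particular N_δ(ω) ≤ (2/δ)(N_1(ω) + 1) when δ ≤ 1 and Δ = 1. -/
import Mathlib


open Set

/-- The greedy stopping-time sequence associated to a control `ω`, threshold `δ`,
on the interval `[0,T]`. -/
noncomputable def tauSeq (T : ℝ) (ω : ℝ → ℝ → ℝ) (δ : ℝ) : ℕ → ℝ
  | 0 => 0
  | n + 1 =>
      sInf ({u : ℝ | tauSeq T ω δ n < u ∧ u ≤ T ∧ δ ≤ ω (tauSeq T ω δ n) u} ∪ {T})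

/-- `N_δ(ω) = sup{n : τ_n < T}`. -/
noncomputable def Ncount (T : ℝ) (ω : ℝ → ℝ → ℝ) (δ : ℝ) : ℕ :=
  sSup {n : ℕ | tauSeq T ω δ n < T}

section Aux

variable {T : ℝ} {ω : ℝ → ℝ → ℝ} {δ : ℝ}

lemma tauSeq_zero : tauSeq T ω δ 0 = 0 := rfl

lemma tauSeq_succ (n : ℕ) :
    tauSeq T ω δ (n + 1) =
      sInf ({u : ℝ | tauSeq T ω δ n < u ∧ u ≤ T ∧ δ ≤ ω (tauSeq T ω δ n) u} ∪ {T}) := rfl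

lemma tauSeq_nonneg_le (hT : 0 ≤ T) :
    ∀ n, 0 ≤ tauSeq T ω δ n ∧ tauSeq T ω δ n ≤ T := by
  intro n
  induction n with
  | zero => exact ⟨le_refl 0, hT⟩
  | succ n ih =>
    rw [tauSeq_succ]
    have hbdd : BddBelow ({u : ℝ | tauSeq T ω δ n < u ∧ u ≤ T ∧ δ ≤ ω (tauSeq T ω δ n) u} ∪ {T}) := by
      refine ⟨0, ?_⟩
      rintro u (⟨h1, _, _⟩ | h)
      · exact le_of_lt (lt_of_le_of_lt ih.1 h1)
      · simp only [mem_singleton_iff] at h; exact h ▸ hT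
    constructor
    · refine le_csInf ⟨T, Or.inr rfl⟩ ?_
      rintro u (⟨h1, _, _⟩ | h)
      · exact le_of_lt (lt_of_le_of_lt ih.1 h1)
      · simp only [mem_singleton_iff] at h; exact h ▸ hT
    · exact csInf_le hbdd (Or.inr rfl)

lemma tauSeq_le_succ (hT : 0 ≤ T) (n : ℕ) :
    tauSeq T ω δ n ≤ tauSeq T ω δ (n + 1) := by
  rw [tauSeq_succ]
  refine le_csInf ⟨T, Or.inr rfl⟩ ?_
  rintro u (⟨h1, _, _⟩ | h)
  · exact le_of_lt h1
  · simp only [mem_singleton_iff] at h; exact h ▸ (tauSeq_nonneg_le hT n).2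

lemma tauSeq_mono (hT : 0 ≤ T) : Monotone (tauSeq T ω δ) :=
  monotone_nat_of_le_succ (tauSeq_le_succ hT)

lemma tauSeq_bddBelow (hT : 0 ≤ T) (n : ℕ) :
    BddBelow ({u : ℝ | tauSeq T ω δ n < u ∧ u ≤ T ∧ δ ≤ ω (tauSeq T ω δ n) u} ∪ {T}) := by
  refine ⟨0, ?_⟩
  rintro u (⟨h1, _, _⟩ | h)
  · exact le_of_lt (lt_of_le_of_lt (tauSeq_nonneg_le hT n).1 h1)
  · simp only [mem_singleton_iff] at h; exact h ▸ hT

/-- Strictly between consecutive stopping times, the control increment is `< δ`. -/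
lemma tauSeq_between (hT : 0 ≤ T) (n : ℕ) {u : ℝ} (h1 : tauSeq T ω δ n < u)
    (h2 : u < tauSeq T ω δ (n + 1)) (h3 : u ≤ T) : ω (tauSeq T ω δ n) u < δ := by
  by_contra h
  push_neg at h
  have : tauSeq T ω δ (n + 1) ≤ u := by
    rw [tauSeq_succ]
    exact csInf_le (tauSeq_bddBelow hT n) (Or.inl ⟨h1, h3, h⟩)
  exact absurd this (not_le.mpr h2)

/-- If a stopping time has not reached `T`, the next one is strictly larger. -/
lemma tauSeq_lt_succ (hT : 0 ≤ T) (hδ : 0 < δ)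
    (hzero : ∀ t, 0 ≤ t → t ≤ T → ω t t = 0)
    (hcont : ContinuousOn (fun p : ℝ × ℝ => ω p.1 p.2)
      {p : ℝ × ℝ | 0 ≤ p.1 ∧ p.1 ≤ p.2 ∧ p.2 ≤ T})
    {n : ℕ} (hn : tauSeq T ω δ n < T) :
    tauSeq T ω δ n < tauSeq T ω δ (n + 1) := by
  set a := tauSeq T ω δ n with ha
  have ha0 : 0 ≤ a := (tauSeq_nonneg_le hT n).1
  have haT : a ≤ T := (tauSeq_nonneg_le hT n).2
  have hmem : ((a, a) : ℝ × ℝ) ∈ {p : ℝ × ℝ | 0 ≤ p.1 ∧ p.1 ≤ p.2 ∧ p.2 ≤ T} :=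
    ⟨ha0, le_refl a, haT⟩
  have hcw : ContinuousWithinAt (fun p : ℝ × ℝ => ω p.1 p.2)
      {p : ℝ × ℝ | 0 ≤ p.1 ∧ p.1 ≤ p.2 ∧ p.2 ≤ T} (a, a) := hcont _ hmem
  have hval : ω a a = 0 := hzero a ha0 haT
  have hev : ∀ᶠ q in nhdsWithin ((a, a) : ℝ × ℝ)
      {p : ℝ × ℝ | 0 ≤ p.1 ∧ p.1 ≤ p.2 ∧ p.2 ≤ T},
      (fun p : ℝ × ℝ => ω p.1 p.2) q < δ := by
    have : Set.Iio δ ∈ nhds (ω a a) := by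
      rw [hval]; exact Iio_mem_nhds hδ
    exact hcw this
  rw [Filter.eventually_iff, Metric.mem_nhdsWithin_iff] at hev
  obtain ⟨ε, hε, hball⟩ := hev
  have key : ∀ u : ℝ, a < u → u ≤ T → u < a + ε → ω a u < δ := by
    intro u h1 h2 h3
    have hq : ((a, u) : ℝ × ℝ) ∈ Metric.ball ((a, a) : ℝ × ℝ) ε ∩
        {p : ℝ × ℝ | 0 ≤ p.1 ∧ p.1 ≤ p.2 ∧ p.2 ≤ T} := by
      constructor
      · rw [Metric.mem_ball, Prod.dist_eq]
        simp only [dist_self]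
        rw [max_lt_iff]
        refine ⟨hε, ?_⟩
        rw [Real.dist_eq, abs_of_nonneg (by linarith)]
        linarith
      · exact ⟨ha0, le_of_lt h1, h2⟩
    exact hball hq
  have : min (a + ε / 2) T ≤ tauSeq T ω δ (n + 1) := by
    rw [tauSeq_succ]
    refine le_csInf ⟨T, Or.inr rfl⟩ ?_
    rintro u (⟨h1, h2, h3⟩ | h)
    · by_contra hc
      push_neg at hc
      have hu : u < a + ε / 2 := lt_of_lt_of_le (lt_of_lt_of_le hc (min_le_left _ _)) le_rfl
      have := key u h1 h2 (by linarith)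
      linarith
    · simp only [mem_singleton_iff] at h
      exact h ▸ min_le_right _ _
  have : min (a + ε / 2) T > a := lt_min (by linarith) hn
  linarith [lt_of_lt_of_le this ‹min (a + ε / 2) T ≤ tauSeq T ω δ (n + 1)›]

/-- If the next stopping time is `< T`, the increment is at least `δ`. -/
lemma tauSeq_increment (hT : 0 ≤ T) (hδ : 0 < δ)
    (hzero : ∀ t, 0 ≤ t → t ≤ T → ω t t = 0)
    (hcont : ContinuousOn (fun p : ℝ × ℝ => ω p.1 p.2)
      {p : ℝ × ℝ | 0 ≤ p.1 ∧ p.1 ≤ p.2 ∧ p.2 ≤ T})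
    {n : ℕ} (hn : tauSeq T ω δ (n + 1) < T) :
    δ ≤ ω (tauSeq T ω δ n) (tauSeq T ω δ (n + 1)) := by
  set a := tauSeq T ω δ n with ha
  set c := tauSeq T ω δ (n + 1) with hc
  set S := {u : ℝ | a < u ∧ u ≤ T ∧ δ ≤ ω a u} with hS
  have hcdef : c = sInf (S ∪ {T}) := tauSeq_succ n
  have ha0 : 0 ≤ a := (tauSeq_nonneg_le hT n).1
  have hac : a ≤ c := tauSeq_le_succ hT n
  have hcT : c ≤ T := (tauSeq_nonneg_le hT (n + 1)).2
  have hSne : S.Nonempty := by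
    by_contra hSe
    rw [not_nonempty_iff_eq_empty] at hSe
    rw [hSe, Set.empty_union, csInf_singleton] at hcdef
    exact absurd hcdef (ne_of_lt hn)
  have hSbdd : BddBelow S := by
    refine ⟨a, ?_⟩
    rintro u ⟨h1, _, _⟩
    exact le_of_lt h1
  have hinf : c = sInf S := by
    rw [hcdef, csInf_union hSbdd hSne (bddBelow_singleton) (singleton_nonempty T),
      csInf_singleton]
    rcases le_or_gt T (sInf S) with h | h
    · exfalso
      rw [hcdef, csInf_union hSbdd hSne (bddBelow_singleton) (singleton_nonempty T),
        csInf_singleton, inf_eq_right.mpr h] at hn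
      exact lt_irrefl T hn
    · exact inf_eq_left.mpr (le_of_lt h)
  have hclos : c ∈ closure S := hinf ▸ csInf_mem_closure hSne hSbdd
  -- continuity of u ↦ ω a u within S at c
  have hmemD : ((a, c) : ℝ × ℝ) ∈ {p : ℝ × ℝ | 0 ≤ p.1 ∧ p.1 ≤ p.2 ∧ p.2 ≤ T} :=
    ⟨ha0, hac, hcT⟩
  have hg : ContinuousWithinAt (fun u : ℝ => ω a u) S c := by
    have he : ContinuousWithinAt (fun u : ℝ => ((a, u) : ℝ × ℝ)) S c :=
      (Continuous.continuousWithinAt (by continuity))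
    have hmaps : MapsTo (fun u : ℝ => ((a, u) : ℝ × ℝ)) S
        {p : ℝ × ℝ | 0 ≤ p.1 ∧ p.1 ≤ p.2 ∧ p.2 ≤ T} := by
      rintro u ⟨h1, h2, _⟩
      exact ⟨ha0, le_of_lt h1, h2⟩
    exact (hcont _ hmemD).comp he hmaps
  have hne : (nhdsWithin c S).NeBot := mem_closure_iff_nhdsWithin_neBot.mp hclos
  have hev : ∀ᶠ u in nhdsWithin c S, δ ≤ ω a u :=
    eventually_nhdsWithin_of_forall (fun u hu => hu.2.2)
  exact ge_of_tendsto hg.tendsto hev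

/-- Superadditive chain: `n` increments each of size `≥ δ` accumulate. -/
lemma tauSeq_chain (hT : 0 ≤ T) (hδ : 0 < δ)
    (hzero : ∀ t, 0 ≤ t → t ≤ T → ω t t = 0)
    (hnonneg : ∀ s t, 0 ≤ s → s ≤ t → t ≤ T → 0 ≤ ω s t)
    (hsuper : ∀ s t u, 0 ≤ s → s ≤ t → t ≤ u → u ≤ T → ω s t + ω t u ≤ ω s u)
    (hcont : ContinuousOn (fun p : ℝ × ℝ => ω p.1 p.2)
      {p : ℝ × ℝ | 0 ≤ p.1 ∧ p.1 ≤ p.2 ∧ p.2 ≤ T}) :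
    ∀ n i : ℕ, tauSeq T ω δ (i + n) < T →
      (n : ℝ) * δ ≤ ω (tauSeq T ω δ i) (tauSeq T ω δ (i + n)) := by
  intro n
  induction n with
  | zero =>
    intro i _
    simp only [Nat.add_zero, Nat.cast_zero, zero_mul]
    exact hnonneg _ _ (tauSeq_nonneg_le hT i).1 le_rfl (tauSeq_nonneg_le hT i).2
  | succ n ih =>
    intro i hi
    have h1 : tauSeq T ω δ (i + n) < T :=
      lt_of_le_of_lt (tauSeq_mono hT (by omega : i + n ≤ i + (n + 1))) hi
    have hchain := ih i h1
    have hstep : δ ≤ ω (tauSeq T ω δ (i + n)) (tauSeq T ω δ (i + n + 1)) := by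
      have : tauSeq T ω δ (i + n + 1) < T := by
        rw [show i + n + 1 = i + (n + 1) by omega]; exact hi
      exact tauSeq_increment hT hδ hzero hcont this
    have hsup := hsuper (tauSeq T ω δ i) (tauSeq T ω δ (i + n)) (tauSeq T ω δ (i + n + 1))
      (tauSeq_nonneg_le hT i).1 (tauSeq_mono hT (by omega : i ≤ i + n))
      (tauSeq_le_succ hT (i + n)) (tauSeq_nonneg_le hT (i + n + 1)).2
    have heq : i + (n + 1) = i + n + 1 := by omega
    rw [heq]
    push_cast
    linarith

/-- The set of indices with `τ n < T` is bounded above. -/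
lemma tauSeq_bddAbove (hT : 0 ≤ T) (hδ : 0 < δ)
    (hzero : ∀ t, 0 ≤ t → t ≤ T → ω t t = 0)
    (hnonneg : ∀ s t, 0 ≤ s → s ≤ t → t ≤ T → 0 ≤ ω s t)
    (hsuper : ∀ s t u, 0 ≤ s → s ≤ t → t ≤ u → u ≤ T → ω s t + ω t u ≤ ω s u)
    (hcont : ContinuousOn (fun p : ℝ × ℝ => ω p.1 p.2)
      {p : ℝ × ℝ | 0 ≤ p.1 ∧ p.1 ≤ p.2 ∧ p.2 ≤ T}) :
    BddAbove {n : ℕ | tauSeq T ω δ n < T} := by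
  refine ⟨Nat.floor (ω 0 T / δ), ?_⟩
  intro n hn
  simp only [mem_setOf_eq] at hn
  have hchain := tauSeq_chain hT hδ hzero hnonneg hsuper hcont n 0 (by simpa using hn)
  simp only [Nat.zero_add, tauSeq_zero] at hchain
  have hub : ω 0 (tauSeq T ω δ (0 + n)) ≤ ω 0 T := by
    have := hsuper 0 (tauSeq T ω δ (0 + n)) T le_rfl (tauSeq_nonneg_le hT (0 + n)).1
      (tauSeq_nonneg_le hT (0 + n)).2 le_rfl
    have h0 := hnonneg (tauSeq T ω δ (0 + n)) T (tauSeq_nonneg_le hT (0 + n)).1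
      (tauSeq_nonneg_le hT (0 + n)).2 le_rfl
    linarith
  have : (n : ℝ) ≤ ω 0 T / δ := by
    rw [le_div_iff₀ hδ]
    calc (n : ℝ) * δ ≤ ω 0 (tauSeq T ω δ (0 + n)) := by simpa using hchain
      _ ≤ ω 0 T := hub
  exact Nat.le_floor this

end Aux

theorem Ncount_small_scale_le (T δ Δ : ℝ) (hT : 0 ≤ T) (hδ : 0 < δ) (hδΔ : δ ≤ Δ)
    (ω : ℝ → ℝ → ℝ)
    (hzero : ∀ t, 0 ≤ t → t ≤ T → ω t t = 0)
    (hnonneg : ∀ s t, 0 ≤ s → s ≤ t → t ≤ T → 0 ≤ ω s t)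
    (hsuper : ∀ s t u, 0 ≤ s → s ≤ t → t ≤ u → u ≤ T → ω s t + ω t u ≤ ω s u)
    (hcont : ContinuousOn (fun p : ℝ × ℝ => ω p.1 p.2)
      {p : ℝ × ℝ | 0 ≤ p.1 ∧ p.1 ≤ p.2 ∧ p.2 ≤ T}) :
    (Ncount T ω δ : ℝ) ≤ (Δ / δ) * (2 * (Ncount T ω Δ : ℝ) + 2) := by
  have hΔ : 0 < Δ := lt_of_lt_of_le hδ hδΔ
  have hr1 : (1 : ℝ) ≤ Δ / δ := (one_le_div hδ).mpr hδΔ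
  -- trivial case T = 0
  rcases eq_or_lt_of_le hT with hT0 | hT0
  · have : {n : ℕ | tauSeq T ω δ n < T} = ∅ := by
      ext n
      simp only [mem_setOf_eq, mem_empty_iff_false, iff_false, not_lt]
      exact le_trans (le_of_eq hT0.symm) (tauSeq_nonneg_le hT n).1
    rw [Ncount, this, csSup_empty]
    simp only [Nat.bot_eq_zero, Nat.cast_zero]
    positivity
  -- main case
  set τ := tauSeq T ω δ with hτ
  set σ := tauSeq T ω Δ with hσ
  set N := Ncount T ω δ with hNdef
  set K := Ncount T ω Δ with hKdef
  have hAδbdd : BddAbove {n : ℕ | τ n < T} :=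
    tauSeq_bddAbove hT hδ hzero hnonneg hsuper hcont
  have hAΔbdd : BddAbove {n : ℕ | σ n < T} :=
    tauSeq_bddAbove hT hΔ hzero hnonneg hsuper hcont
  have hAδne : {n : ℕ | τ n < T}.Nonempty := ⟨0, by simpa [hτ, tauSeq_zero] using hT0⟩
  have hAΔne : {n : ℕ | σ n < T}.Nonempty := ⟨0, by simpa [hσ, tauSeq_zero] using hT0⟩
  have hNmem : τ N < T := Nat.sSup_mem hAδne hAδbdd
  have hσK1 : σ (K + 1) = T := by
    refine le_antisymm (tauSeq_nonneg_le hT (K + 1)).2 ?_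
    by_contra hc
    push_neg at hc
    have : K + 1 ≤ K := le_csSup hAΔbdd hc
    omega
  -- the window function
  set m : ℕ := Nat.floor (Δ / δ) + 1 with hm
  have hm1 : 1 ≤ m := by omega
  have hmδ : Δ < (m : ℝ) * δ := by
    have := Nat.lt_floor_add_one (Δ / δ)
    rw [hm]
    push_cast
    calc Δ = (Δ / δ) * δ := by field_simp
      _ < ((Nat.floor (Δ / δ) : ℝ) + 1) * δ := by
        apply mul_lt_mul_of_pos_right this hδ
  have hmle : (m : ℝ) ≤ Δ / δ + 1 := by
    rw [hm]
    push_cast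
    have : (Nat.floor (Δ / δ) : ℝ) ≤ Δ / δ := Nat.floor_le (by positivity)
    linarith
  set g : ℕ → ℕ := fun i => sSup {k : ℕ | k ≤ K ∧ σ k ≤ τ i} with hg
  have hgne : ∀ i, {k : ℕ | k ≤ K ∧ σ k ≤ τ i}.Nonempty := by
    intro i
    exact ⟨0, Nat.zero_le K, by
      show σ 0 ≤ τ i
      rw [hσ, tauSeq_zero]
      exact (tauSeq_nonneg_le hT i).1⟩
  have hgbdd : ∀ i, BddAbove {k : ℕ | k ≤ K ∧ σ k ≤ τ i} := fun i => ⟨K, fun k hk => hk.1⟩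
  have hgmem : ∀ i, g i ≤ K ∧ σ (g i) ≤ τ i := fun i => Nat.sSup_mem (hgne i) (hgbdd i)
  have hglt : ∀ i, τ i < T → τ i < σ (g i + 1) := by
    intro i hi
    rcases eq_or_lt_of_le (hgmem i).1 with he | hl
    · rw [he, hσK1]; exact hi
    · by_contra hc
      push_neg at hc
      have : g i + 1 ≤ g i := le_csSup (hgbdd i) ⟨hl, hc⟩
      omega
  have hgmono : ∀ i j, i ≤ j → g i ≤ g j := by
    intro i j hij
    refine csSup_le_csSup (hgbdd j) (hgne i) ?_
    rintro k ⟨h1, h2⟩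
    exact ⟨h1, le_trans h2 (tauSeq_mono hT hij)⟩
  -- key step: within one Δ-window, at most m δ-times
  have hstep : ∀ i, i + m ≤ N → g i + 1 ≤ g (i + m) := by
    intro i him
    by_contra hc
    push_neg at hc
    have hgeq : g (i + m) = g i := le_antisymm (by omega) (hgmono i (i + m) (by omega))
    set k := g i with hk
    have hiN : τ i < T := lt_of_le_of_lt (tauSeq_mono hT (by omega : i ≤ N)) hNmem
    have hjN : τ (i + m) < T := lt_of_le_of_lt (tauSeq_mono hT him) hNmem
    have hσk : σ k ≤ τ i := (hgmem i).2
    have hτij : τ i < τ (i + m) := by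
      have h1 : τ i < τ (i + 1) := tauSeq_lt_succ hT hδ hzero hcont hiN
      exact lt_of_lt_of_le h1 (tauSeq_mono hT (by omega : i + 1 ≤ i + m))
    have hjlt : τ (i + m) < σ (k + 1) := by
      have := hglt (i + m) hjN
      rwa [hgeq] at this
    -- chain lower bound
    have hchain : (m : ℝ) * δ ≤ ω (τ i) (τ (i + m)) :=
      tauSeq_chain hT hδ hzero hnonneg hsuper hcont m i hjN
    -- compare with Δ-window
    have hcomp : ω (τ i) (τ (i + m)) ≤ ω (σ k) (τ (i + m)) := by
      have hs := hsuper (σ k) (τ i) (τ (i + m)) (tauSeq_nonneg_le hT k).1 hσk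
        (le_of_lt hτij) (le_of_lt hjN)
      have h0 := hnonneg (σ k) (τ i) (tauSeq_nonneg_le hT k).1 hσk
        (le_trans (le_of_lt hτij) (le_of_lt hjN))
      linarith
    have hwin : ω (σ k) (τ (i + m)) < Δ :=
      tauSeq_between hT k (lt_of_le_of_lt hσk hτij) hjlt (le_of_lt hjN)
    linarith
  -- iterate the step
  have hiter : ∀ q : ℕ, q * m ≤ N → q ≤ g (q * m) := by
    intro q
    induction q with
    | zero => intro _; exact Nat.zero_le _
    | succ q ih =>
      intro hq
      have hq' : q * m ≤ N := le_trans (by nlinarith) hq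
      have := hstep (q * m) (by rw [show q * m + m = (q + 1) * m by ring]; exact hq)
      have hgq := ih hq'
      have : q + 1 ≤ g (q * m + m) := by omega
      rwa [show q * m + m = (q + 1) * m by ring] at this
  have hfinal : N < (K + 1) * m := by
    by_contra hc
    push_neg at hc
    have h1 := hiter (K + 1) hc
    have h2 := (hgmem ((K + 1) * m)).1
    omega
  -- numeric conclusion
  have hcast : (N : ℝ) + 1 ≤ ((K : ℝ) + 1) * (m : ℝ) := by
    have : N + 1 ≤ (K + 1) * m := hfinal
    exact_mod_cast this
  have hK0 : (0 : ℝ) ≤ (K : ℝ) := Nat.cast_nonneg K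
  nlinarith [mul_le_mul_of_nonneg_left hmle (by linarith : (0:ℝ) ≤ (K:ℝ) + 1),
    mul_le_mul_of_nonneg_left hr1 (by linarith : (0:ℝ) ≤ (K:ℝ) + 1)]
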